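/- Let φ : S_6 → S_6 be an outer automorphism. Then φ maps every transposition to a product of three disjoint transpositions; in particular, the image of a transposition under φ has no fixed points. -/

import Mathlib

set_option maxHeartbeats 4000000
set_option synthInstance.maxHeartbeats 2000000
set_option synthInstance.maxSize 2000

open Equiv

/-- Candidate conjugating map built from a chain of five transpositions. -/
def G6 (a1 b1 a2 b2 a3 b3 a4 b4 a5 b5 : Fin 6) : Fin 6 → Fin 6 :=
  ![if a1 = a2 ∨ a1 = b2 then b1 else a1,
    if a1 = a2 ∨ a1 = b2 then a1 else b1,
    if a2 = a1 ∨ a2 = b1 then b2 else a2,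
    if a3 = a2 ∨ a3 = b2 then b3 else a3,
    if a4 = a3 ∨ a4 = b3 then b4 else a4,
    if a5 = a4 ∨ a5 = b4 then b5 else a5]

theorem braid_chain : ∀ a1 b1 : Fin 6, a1 < b1 → ∀ a2 b2, a2 < b2 →
    ((swap a1 b1 * swap a2 b2)^3 = 1 ∧ swap a1 b1 ≠ swap a2 b2) →
    ∀ a3 b3, a3 < b3 →
    ((swap a2 b2 * swap a3 b3)^3 = 1 ∧ swap a2 b2 ≠ swap a3 b3) →
    (swap a1 b1 * swap a3 b3 = swap a3 b3 * swap a1 b1 ∧ swap a1 b1 ≠ swap a3 b3) →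
    ∀ a4 b4, a4 < b4 →
    ((swap a3 b3 * swap a4 b4)^3 = 1 ∧ swap a3 b3 ≠ swap a4 b4) →
    (swap a1 b1 * swap a4 b4 = swap a4 b4 * swap a1 b1 ∧ swap a1 b1 ≠ swap a4 b4) →
    (swap a2 b2 * swap a4 b4 = swap a4 b4 * swap a2 b2 ∧ swap a2 b2 ≠ swap a4 b4) →
    ∀ a5 b5, a5 < b5 →
    ((swap a4 b4 * swap a5 b5)^3 = 1 ∧ swap a4 b4 ≠ swap a5 b5) →
    (swap a1 b1 * swap a5 b5 = swap a5 b5 * swap a1 b1 ∧ swap a1 b1 ≠ swap a5 b5) →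
    (swap a2 b2 * swap a5 b5 = swap a5 b5 * swap a2 b2 ∧ swap a2 b2 ≠ swap a5 b5) →
    (swap a3 b3 * swap a5 b5 = swap a5 b5 * swap a3 b3 ∧ swap a3 b3 ≠ swap a5 b5) →
    Function.Injective (G6 a1 b1 a2 b2 a3 b3 a4 b4 a5 b5) ∧
    swap a1 b1 = swap (G6 a1 b1 a2 b2 a3 b3 a4 b4 a5 b5 0) (G6 a1 b1 a2 b2 a3 b3 a4 b4 a5 b5 1) ∧
    swap a2 b2 = swap (G6 a1 b1 a2 b2 a3 b3 a4 b4 a5 b5 1) (G6 a1 b1 a2 b2 a3 b3 a4 b4 a5 b5 2) ∧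
    swap a3 b3 = swap (G6 a1 b1 a2 b2 a3 b3 a4 b4 a5 b5 2) (G6 a1 b1 a2 b2 a3 b3 a4 b4 a5 b5 3) ∧
    swap a4 b4 = swap (G6 a1 b1 a2 b2 a3 b3 a4 b4 a5 b5 3) (G6 a1 b1 a2 b2 a3 b3 a4 b4 a5 b5 4) ∧
    swap a5 b5 = swap (G6 a1 b1 a2 b2 a3 b3 a4 b4 a5 b5 4) (G6 a1 b1 a2 b2 a3 b3 a4 b4 a5 b5 5) := by
  decide

lemma isSwap_ordered {σ : Equiv.Perm (Fin 6)} (h : σ.IsSwap) :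
    ∃ a b : Fin 6, a < b ∧ σ = swap a b := by
  obtain ⟨x, y, hxy, rfl⟩ := h
  rcases lt_or_gt_of_ne hxy with h | h
  · exact ⟨x, y, h, rfl⟩
  · exact ⟨y, x, h, swap_comm x y⟩

lemma inner_of_swap (φ : MulAut (Equiv.Perm (Fin 6)))
    (h : ∀ i : Fin 5, (φ (swap (Fin.castSucc i) (Fin.succ i))).IsSwap) :
    ∃ g : Equiv.Perm (Fin 6), ∀ x, φ x = g * x * g⁻¹ := by
  have h0 := isSwap_ordered (h 0)
  have h1 := isSwap_ordered (h 1)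
  have h2 := isSwap_ordered (h 2)
  have h3 := isSwap_ordered (h 3)
  have h4 := isSwap_ordered (h 4)
  rw [show swap (Fin.castSucc (0 : Fin 5)) (Fin.succ 0) = swap (0 : Fin 6) 1 from rfl] at h0
  rw [show swap (Fin.castSucc (1 : Fin 5)) (Fin.succ 1) = swap (1 : Fin 6) 2 from rfl] at h1
  rw [show swap (Fin.castSucc (2 : Fin 5)) (Fin.succ 2) = swap (2 : Fin 6) 3 from rfl] at h2
  rw [show swap (Fin.castSucc (3 : Fin 5)) (Fin.succ 3) = swap (3 : Fin 6) 4 from rfl] at h3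
  rw [show swap (Fin.castSucc (4 : Fin 5)) (Fin.succ 4) = swap (4 : Fin 6) 5 from rfl] at h4
  obtain ⟨a1, b1, hab1, e1⟩ := h0
  obtain ⟨a2, b2, hab2, e2⟩ := h1
  obtain ⟨a3, b3, hab3, e3⟩ := h2
  obtain ⟨a4, b4, hab4, e4⟩ := h3
  obtain ⟨a5, b5, hab5, e5⟩ := h4
  -- the braid/commutation conditions transported through φ
  have hbr : ∀ s t : Equiv.Perm (Fin 6), (s * t)^3 = 1 → (φ s * φ t)^3 = 1 := by
    intro s t hst
    rw [← map_mul, ← map_pow, hst, map_one]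
  have hcm : ∀ s t : Equiv.Perm (Fin 6), s * t = t * s → φ s * φ t = φ t * φ s := by
    intro s t hst
    rw [← map_mul, ← map_mul, hst]
  have hne : ∀ s t : Equiv.Perm (Fin 6), s ≠ t → φ s ≠ φ t := fun s t hst hh =>
    hst (φ.injective hh)
  have key := braid_chain a1 b1 hab1 a2 b2 hab2
    (by rw [← e1, ← e2]; exact ⟨hbr _ _ (by decide), hne _ _ (by decide)⟩)
    a3 b3 hab3
    (by rw [← e2, ← e3]; exact ⟨hbr _ _ (by decide), hne _ _ (by decide)⟩)
    (by rw [← e1, ← e3]; exact ⟨hcm _ _ (by decide), hne _ _ (by decide)⟩)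
    a4 b4 hab4
    (by rw [← e3, ← e4]; exact ⟨hbr _ _ (by decide), hne _ _ (by decide)⟩)
    (by rw [← e1, ← e4]; exact ⟨hcm _ _ (by decide), hne _ _ (by decide)⟩)
    (by rw [← e2, ← e4]; exact ⟨hcm _ _ (by decide), hne _ _ (by decide)⟩)
    a5 b5 hab5
    (by rw [← e4, ← e5]; exact ⟨hbr _ _ (by decide), hne _ _ (by decide)⟩)
    (by rw [← e1, ← e5]; exact ⟨hcm _ _ (by decide), hne _ _ (by decide)⟩)
    (by rw [← e2, ← e5]; exact ⟨hcm _ _ (by decide), hne _ _ (by decide)⟩)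
    (by rw [← e3, ← e5]; exact ⟨hcm _ _ (by decide), hne _ _ (by decide)⟩)
  obtain ⟨hinj, k1, k2, k3, k4, k5⟩ := key
  set G := G6 a1 b1 a2 b2 a3 b3 a4 b4 a5 b5 with hG
  have hbij : Function.Bijective G := Finite.injective_iff_bijective.mp hinj
  set g : Equiv.Perm (Fin 6) := Equiv.ofBijective G hbij with hgdef
  have hgapp : ∀ x : Fin 6, g x = G x := fun x => rfl
  have hconj : ∀ i : Fin 5, φ (swap (Fin.castSucc i) (Fin.succ i)) =
      g * swap (Fin.castSucc i) (Fin.succ i) * g⁻¹ := by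
    intro i
    fin_cases i
    · show φ (swap (0 : Fin 6) 1) = g * swap (0 : Fin 6) 1 * g⁻¹
      rw [e1, k1]; exact swap_apply_apply g 0 1
    · show φ (swap (1 : Fin 6) 2) = g * swap (1 : Fin 6) 2 * g⁻¹
      rw [e2, k2]; exact swap_apply_apply g 1 2
    · show φ (swap (2 : Fin 6) 3) = g * swap (2 : Fin 6) 3 * g⁻¹
      rw [e3, k3]; exact swap_apply_apply g 2 3
    · show φ (swap (3 : Fin 6) 4) = g * swap (3 : Fin 6) 4 * g⁻¹
      rw [e4, k4]; exact swap_apply_apply g 3 4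
    · show φ (swap (4 : Fin 6) 5) = g * swap (4 : Fin 6) 5 * g⁻¹
      rw [e5, k5]; exact swap_apply_apply g 4 5
  refine ⟨g, fun x => ?_⟩
  have hx : x ∈ Submonoid.closure (Set.range fun i : Fin 5 ↦ swap (Fin.castSucc i) (Fin.succ i)) := by
    rw [Equiv.Perm.mclosure_swap_castSucc_succ]; exact Submonoid.mem_top x
  induction hx using Submonoid.closure_induction with
  | mem y hy => obtain ⟨i, rfl⟩ := hy; exact hconj i
  | one => rw [map_one]; group
  | mul y z _ _ ihy ihz => rw [map_mul, ihy, ihz]; group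

lemma sign_image_of_swap (φ : MulAut (Equiv.Perm (Fin 6))) {τ : Equiv.Perm (Fin 6)}
    (hτ : τ.IsSwap) : Equiv.Perm.sign (φ τ) = -1 := by
  obtain ⟨u, v, huv, rfl⟩ := hτ
  by_contra hne
  have h1 : Equiv.Perm.sign (φ (swap u v)) = 1 := by
    rcases Int.units_eq_one_or (Equiv.Perm.sign (φ (swap u v))) with h | h
    · exact h
    · exact absurd h hne
  have hall : ∀ σ : Equiv.Perm (Fin 6), σ.IsSwap → Equiv.Perm.sign (φ σ) = 1 := by
    intro σ hσ
    obtain ⟨x, y, hxy, rfl⟩ := hσ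
    obtain ⟨c, hc⟩ := isConj_iff.mp (Equiv.Perm.isConj_swap hxy huv)
    have hss : φ (swap x y) = (φ c)⁻¹ * φ (swap u v) * φ c := by
      rw [← map_inv, ← map_mul, ← map_mul]
      congr 1
      rw [← hc]; group
    rw [hss, map_mul, map_mul, map_inv, h1, mul_one, inv_mul_cancel]
  have hall2 : ∀ x : Equiv.Perm (Fin 6), Equiv.Perm.sign (φ x) = 1 := by
    intro x
    have hx : x ∈ Submonoid.closure {σ : Equiv.Perm (Fin 6) | σ.IsSwap} := by
      rw [Equiv.Perm.mclosure_isSwap]; exact Submonoid.mem_top x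
    induction hx using Submonoid.closure_induction with
    | mem y hy => exact hall y hy
    | one => simp
    | mul y z _ _ ihy ihz => rw [map_mul, map_mul, ihy, ihz, one_mul]
  have hbad := hall2 (φ.symm (swap 0 1))
  rw [MulEquiv.apply_symm_apply, Equiv.Perm.sign_swap (by decide)] at hbad
  exact absurd hbad (by decide)

lemma cycleType_of_involution (σ : Equiv.Perm (Fin 6)) (h2 : σ ^ 2 = 1)
    (hs : Equiv.Perm.sign σ = -1) (hns : ¬ σ.IsSwap) :
    σ.cycleType = Multiset.replicate 3 2 := by
  have hne : σ ≠ 1 := by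
    intro h; rw [h] at hs; simp at hs
  have hord : orderOf σ = 2 := orderOf_eq_prime h2 hne
  obtain ⟨n, hn⟩ := Equiv.Perm.cycleType_prime_order (by rw [hord]; exact Nat.prime_two)
  rw [hord] at hn
  have hsum : σ.cycleType.sum ≤ 6 := by
    rw [Equiv.Perm.sum_cycleType]
    exact le_trans (Finset.card_le_univ _) (by simp)
  rw [hn, Multiset.sum_replicate, smul_eq_mul] at hsum
  have hnle : n ≤ 2 := by omega
  have hsgn := Equiv.Perm.sign_of_cycleType σ
  rw [hn, hs, Multiset.sum_replicate, Multiset.card_replicate, smul_eq_mul] at hsgn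
  interval_cases n
  · -- n = 0 : σ would be a swap
    exfalso
    apply hns
    rw [← Equiv.Perm.card_support_eq_two, ← Equiv.Perm.sum_cycleType, hn]
    rfl
  · -- n = 1 : sign would be 1
    exfalso
    rw [show 2 * (1 + 1) + (1 + 1) = 6 from rfl] at hsgn
    exact absurd hsgn.symm (by decide)
  · rw [hn]

def sigma0 : Equiv.Perm (Fin 6) := swap 0 1 * (swap 2 3 * swap 4 5)

lemma perm_disjoint_of_forall {f g : Equiv.Perm (Fin 6)}
    (h : ∀ x : Fin 6, f x = x ∨ g x = x) : f.Disjoint g := h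

lemma conj_disjoint {f g c : Equiv.Perm (Fin 6)} (h : f.Disjoint g) :
    (c * f * c⁻¹).Disjoint (c * g * c⁻¹) := by
  intro x
  rcases h (c⁻¹ x) with hf | hg
  · left
    show c (f (c⁻¹ x)) = x
    rw [hf]; simp
  · right
    show c (g (c⁻¹ x)) = x
    rw [hg]; simp

theorem stmt12 (φ : MulAut (Equiv.Perm (Fin 6)))
    (houter : ¬ ∃ g : Equiv.Perm (Fin 6), ∀ x, φ x = g * x * g⁻¹) :
    ∀ τ : Equiv.Perm (Fin 6), τ.IsSwap →
      (∃ a b c : Equiv.Perm (Fin 6), a.IsSwap ∧ b.IsSwap ∧ c.IsSwap ∧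
        a.Disjoint b ∧ a.Disjoint c ∧ b.Disjoint c ∧ φ τ = a * b * c) ∧
      (∀ i : Fin 6, φ τ i ≠ i) := by
  intro τ hτ
  have hsign : Equiv.Perm.sign (φ τ) = -1 := sign_image_of_swap φ hτ
  obtain ⟨u, v, huv, hτeq⟩ := hτ
  have hσ2 : φ τ ^ 2 = 1 := by
    rw [← map_pow, hτeq, sq, swap_mul_self, map_one]
  have hns : ¬ (φ τ).IsSwap := by
    intro hs
    refine houter (inner_of_swap φ ?_)
    intro i
    have hcj : IsConj (swap (Fin.castSucc i) (Fin.succ i)) τ := by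
      rw [hτeq]
      exact Equiv.Perm.isConj_swap (show Fin.castSucc i < Fin.succ i from Fin.castSucc_lt_succ).ne huv
    obtain ⟨c, hc⟩ := isConj_iff.mp (φ.toMonoidHom.map_isConj hcj)
    obtain ⟨x, y, hxy, hxyeq⟩ := hs
    have hval : φ (swap (Fin.castSucc i) (Fin.succ i)) = c⁻¹ * φ τ * c := by
      have : (φ.toMonoidHom : Equiv.Perm (Fin 6) → Equiv.Perm (Fin 6))
          = (φ : Equiv.Perm (Fin 6) → Equiv.Perm (Fin 6)) := rfl
      rw [this] at hc
      rw [← hc]; group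
    refine ⟨c⁻¹ x, c⁻¹ y, fun hh => hxy (Equiv.injective _ hh), ?_⟩
    rw [hval, hxyeq, swap_apply_apply c⁻¹ x y, inv_inv]
  have hct : (φ τ).cycleType = Multiset.replicate 3 2 :=
    cycleType_of_involution _ hσ2 hsign hns
  have hct0 : sigma0.cycleType = Multiset.replicate 3 2 := by
    have d1 : (swap (2 : Fin 6) 3).Disjoint (swap 4 5) :=
      perm_disjoint_of_forall (by decide)
    have d2 : (swap (0 : Fin 6) 1).Disjoint (swap 2 3 * swap 4 5) :=
      perm_disjoint_of_forall (by decide)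
    rw [sigma0, Equiv.Perm.Disjoint.cycleType_mul d2, Equiv.Perm.Disjoint.cycleType_mul d1,
      (Equiv.Perm.isCycle_swap (show (0:Fin 6) ≠ 1 by decide)).cycleType,
      (Equiv.Perm.isCycle_swap (show (2:Fin 6) ≠ 3 by decide)).cycleType,
      (Equiv.Perm.isCycle_swap (show (4:Fin 6) ≠ 5 by decide)).cycleType,
      Equiv.Perm.card_support_swap (show (0:Fin 6) ≠ 1 by decide),
      Equiv.Perm.card_support_swap (show (2:Fin 6) ≠ 3 by decide),
      Equiv.Perm.card_support_swap (show (4:Fin 6) ≠ 5 by decide)]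
    rfl
  have hconj : IsConj sigma0 (φ τ) :=
    Equiv.Perm.isConj_iff_cycleType_eq.mpr (hct0.trans hct.symm)
  obtain ⟨c, hc⟩ := isConj_iff.mp hconj
  constructor
  · refine ⟨c * swap 0 1 * c⁻¹, c * swap 2 3 * c⁻¹, c * swap 4 5 * c⁻¹, ?_, ?_, ?_, ?_, ?_, ?_, ?_⟩
    · exact ⟨c 0, c 1, (Equiv.injective c).ne (by decide), (swap_apply_apply c 0 1).symm⟩
    · exact ⟨c 2, c 3, (Equiv.injective c).ne (by decide), (swap_apply_apply c 2 3).symm⟩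
    · exact ⟨c 4, c 5, (Equiv.injective c).ne (by decide), (swap_apply_apply c 4 5).symm⟩
    · exact conj_disjoint (perm_disjoint_of_forall (by decide))
    · exact conj_disjoint (perm_disjoint_of_forall (by decide))
    · exact conj_disjoint (perm_disjoint_of_forall (by decide))
    · rw [← hc, sigma0]; group
  · intro i hi
    have hfree : ∀ x : Fin 6, sigma0 x ≠ x := by decide
    apply hfree (c⁻¹ i)
    have h1 : (c * sigma0 * c⁻¹) i = i := by rw [hc]; exact hi
    have h2 : c (sigma0 (c⁻¹ i)) = i := h1
    calc sigma0 (c⁻¹ i) = c⁻¹ (c (sigma0 (c⁻¹ i))) := by simp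
      _ = c⁻¹ i := by rw [h2]
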